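/- Let $(X,\mathcal B,\lambda)$ be a probability space, $T$ a non-singular transformation with Perron–Frobenius operator $P$ (defined by $\int_A Pf\,d\lambda=\int_{T^{-1}A}f\,d\lambda$ for all $f\in L^1(\lambda)$ and measurable $A$). Suppose $\lambda$ is exact, meaning $\int|P^n f|\,d\lambda\to 0$ for every $f\in L^1(\lambda)$ with $\int f\,d\lambda=0$. If $\mu\ll\lambda$ is an infinite $\sigma$-finite $T$-invariant measure, then for every measurable set $A$ with $\mu(A)<\infty$ and every $f\in L^1(\lambda)$ one has $\int_A P^n f\,d\lambda\to 0$ as $n\to\infty$. -/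

import Mathlib

open MeasureTheory Filter ENNReal

theorem stmt2 {X : Type*} [MeasurableSpace X]
    (T : X → X) (hT : Measurable T)
    (lam : Measure X) [IsProbabilityMeasure lam]
    (hns : ∀ A : Set X, MeasurableSet A → lam (T ⁻¹' A) = 0 → lam A = 0)
    (P : (X → ℝ) → (X → ℝ))
    (hPint : ∀ f : X → ℝ, Integrable f lam → Integrable (P f) lam)
    (hP : ∀ f : X → ℝ, Integrable f lam → ∀ A : Set X, MeasurableSet A →
      ∫ x in A, P f x ∂lam = ∫ x in T ⁻¹' A, f x ∂lam)
    (hexact : ∀ f : X → ℝ, Integrable f lam → ∫ x, f x ∂lam = 0 →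
      Tendsto (fun n => ∫ x, |P^[n] f x| ∂lam) atTop (nhds 0))
    (mu : Measure X) [SigmaFinite mu]
    (hinf : mu Set.univ = ∞)
    (hac : mu ≪ lam)
    (hinv : ∀ A : Set X, MeasurableSet A → mu (T ⁻¹' A) = mu A) :
    ∀ A : Set X, MeasurableSet A → mu A < ∞ →
      ∀ f : X → ℝ, Integrable f lam →
        Tendsto (fun n => ∫ x in A, P^[n] f x ∂lam) atTop (nhds 0) := by
  intro A hA hAfin f hf
  -- iterated integrability
  have hPiter : ∀ (n : ℕ) (g : X → ℝ), Integrable g lam → Integrable (P^[n] g) lam := by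
    intro n
    induction n with
    | zero => intro g hg; simpa using hg
    | succ n ih =>
      intro g hg
      rw [Function.iterate_succ_apply']
      exact hPint _ (ih g hg)
  -- key transfer identity
  have key : ∀ (n : ℕ) (g : X → ℝ), Integrable g lam → ∀ B : Set X, MeasurableSet B →
      ∫ x in B, P^[n] g x ∂lam = ∫ x in T^[n] ⁻¹' B, g x ∂lam := by
    intro n
    induction n with
    | zero => intro g hg B hB; simp
    | succ n ih =>
      intro g hg B hB
      rw [show P^[n+1] g = P (P^[n] g) from Function.iterate_succ_apply' P n g]
      rw [hP _ (hPiter n g hg) B hB]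
      rw [ih g hg (T ⁻¹' B) (hT hB)]
      congr 1
      rw [Function.iterate_succ' T n]
      rw [Set.preimage_comp]
  -- invariance iterated
  have hinvn : ∀ n : ℕ, mu (T^[n] ⁻¹' A) = mu A := by
    intro n
    induction n with
    | zero => simp
    | succ n ih =>
      rw [Function.iterate_succ T n, Set.preimage_comp]
      rw [hinv _ ((hT.iterate n) hA), ih]
  -- from exactness: set integrals over T^{-n}A of mean-zero functions tend to 0
  have meanzero : ∀ g : X → ℝ, Integrable g lam → ∫ x, g x ∂lam = 0 →
      Tendsto (fun n => ∫ x in T^[n] ⁻¹' A, g x ∂lam) atTop (nhds 0) := by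
    intro g hg hg0
    have habs := hexact g hg hg0
    apply squeeze_zero_norm _ habs
    intro n
    rw [← key n g hg A hA]
    calc ‖∫ x in A, P^[n] g x ∂lam‖ ≤ ∫ x in A, ‖P^[n] g x‖ ∂lam :=
          norm_integral_le_integral_norm _
      _ ≤ ∫ x, ‖P^[n] g x‖ ∂lam := by
          apply setIntegral_le_integral (hPiter n g hg).norm
          filter_upwards with x using norm_nonneg _
      _ = ∫ x, |P^[n] g x| ∂lam := by simp [Real.norm_eq_abs]
  -- Radon-Nikodym derivative
  set h : X → ℝ≥0∞ := mu.rnDeriv lam with hh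
  have hmeas : Measurable h := Measure.measurable_rnDeriv mu lam
  -- the measures lam (T^[n]⁻¹ A) tend to 0
  have hlam0 : Tendsto (fun n => lam (T^[n] ⁻¹' A)) atTop (nhds 0) := by
    rw [ENNReal.tendsto_nhds_zero]
    intro ε hε
    rcases le_or_gt 1 ε with hε1 | hε1
    · filter_upwards with n
      exact le_trans prob_le_one hε1
    have hεtop : ε ≠ ∞ := (hε1.trans one_lt_top).ne
    set e : ℝ := ε.toReal with he
    have he0 : 0 < e := ENNReal.toReal_pos hε.ne' hεtop
    set m : ℝ := (mu A).toReal with hm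
    have hm0 : 0 ≤ m := ENNReal.toReal_nonneg
    -- find K with large truncated mass
    have hsup : (⨆ K : ℕ, ∫⁻ x, min (h x) K ∂lam) = ∞ := by
      rw [← lintegral_iSup (fun K => hmeas.min measurable_const)
        (fun i j hij x => min_le_min le_rfl (by exact_mod_cast Nat.cast_le.2 hij))]
      have heq : ∀ x, (⨆ K : ℕ, min (h x) K) = h x := by
        intro x
        apply le_antisymm (iSup_le fun K => min_le_left _ _)
        rcases eq_or_ne (h x) ∞ with hx | hx
        · rw [hx]
          simp only [top_inf_eq]
          exact ENNReal.iSup_natCast.ge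
        · obtain ⟨K, hK⟩ := ENNReal.exists_nat_gt hx
          calc h x = min (h x) K := (min_eq_left hK.le).symm
            _ ≤ ⨆ K : ℕ, min (h x) K := le_iSup (fun K : ℕ => min (h x) (K : ℝ≥0∞)) K
      simp only [heq]
      rw [Measure.lintegral_rnDeriv hac]
      exact hinf
    obtain ⟨K, hK⟩ : ∃ K : ℕ, ENNReal.ofReal ((m + 1) / e) < ∫⁻ x, min (h x) K ∂lam := by
      rw [← lt_iSup_iff, hsup]; exact ofReal_lt_top
    -- the truncated function
    set g : X → ℝ := fun x => (min (h x) K).toReal with hg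
    have hgmeas : Measurable g := (hmeas.min measurable_const).ennreal_toReal
    have hgint : Integrable g lam := by
      refine (integrable_const (K : ℝ)).mono' hgmeas.aestronglyMeasurable ?_
      filter_upwards with x
      rw [Real.norm_eq_abs, abs_of_nonneg ENNReal.toReal_nonneg]
      calc (min (h x) K).toReal ≤ ((K : ℝ≥0∞)).toReal :=
            ENNReal.toReal_mono (by simp) (min_le_right _ _)
        _ = K := by simp
    have hmintop : ∀ x, min (h x) (K : ℝ≥0∞) ≠ ∞ := fun x =>
      (lt_of_le_of_lt (min_le_right _ _) (by simp : (K : ℝ≥0∞) < ∞)).ne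
    -- c = ∫ g
    set c : ℝ := ∫ x, g x ∂lam with hc
    have hceq : c = (∫⁻ x, min (h x) K ∂lam).toReal := by
      rw [hc, hg]
      exact integral_toReal (hmeas.min measurable_const).aemeasurable
        (ae_of_all _ fun x => (hmintop x).lt_top)
    have hfin : (∫⁻ x, min (h x) K ∂lam) ≠ ∞ := by
      refine ne_top_of_le_ne_top (by simp : (K : ℝ≥0∞) * lam Set.univ ≠ ∞) ?_
      calc (∫⁻ x, min (h x) K ∂lam) ≤ ∫⁻ _, (K : ℝ≥0∞) ∂lam :=
            lintegral_mono fun x => min_le_right _ _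
        _ = (K : ℝ≥0∞) * lam Set.univ := lintegral_const _
    have hcgt : (m + 1) / e < c := by
      rw [hceq]
      exact (ENNReal.ofReal_lt_iff_lt_toReal (by positivity) hfin).mp hK
    have hcpos : 0 < c := lt_of_le_of_lt (by positivity) hcgt
    -- mean zero function
    have hf0int : Integrable (fun x => g x - c) lam := hgint.sub (integrable_const c)
    have hf00 : ∫ x, (g x - c) ∂lam = 0 := by
      rw [integral_sub hgint (integrable_const c), integral_const]
      simp [hc]
    have htend := meanzero _ hf0int hf00
    have hev : ∀ᶠ n in atTop, |∫ x in T^[n] ⁻¹' A, (g x - c) ∂lam| < 1 := by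
      have : Tendsto (fun n => |∫ x in T^[n] ⁻¹' A, (g x - c) ∂lam|) atTop (nhds 0) := by
        simpa using htend.abs
      exact this.eventually_lt_const one_pos
    filter_upwards [hev] with n hn
    set S := T^[n] ⁻¹' A with hS
    have hSm : MeasurableSet S := (hT.iterate n) hA
    -- ∫_S g ≤ m
    have hSg : ∫ x in S, g x ∂lam ≤ m := by
      have h1 : ∫ x in S, g x ∂lam = (∫⁻ x in S, min (h x) K ∂lam).toReal :=
        integral_toReal ((hmeas.min measurable_const).aemeasurable)
          (ae_of_all _ fun x => (hmintop x).lt_top)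
      rw [h1, hm]
      apply ENNReal.toReal_mono hAfin.ne
      calc (∫⁻ x in S, min (h x) K ∂lam) ≤ ∫⁻ x in S, h x ∂lam :=
            lintegral_mono fun x => min_le_left _ _
        _ = mu S := Measure.setLIntegral_rnDeriv hac S
        _ = mu A := hinvn n
    -- split the set integral
    have hsplit : ∫ x in S, (g x - c) ∂lam
        = ∫ x in S, g x ∂lam - c * (lam S).toReal := by
      rw [integral_sub hgint.integrableOn (integrable_const c).integrableOn,
        setIntegral_const]
      rw [smul_eq_mul, mul_comm]
      rfl
    have hbound : c * (lam S).toReal ≤ m + 1 := by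
      have : c * (lam S).toReal = ∫ x in S, g x ∂lam - ∫ x in S, (g x - c) ∂lam := by
        rw [hsplit]; ring
      rw [this]
      have := abs_lt.mp hn
      linarith [hSg, this.1]
    -- conclude lam S ≤ ε
    have htr : (lam S).toReal ≤ (m + 1) / c := by
      rw [le_div_iff₀ hcpos, mul_comm]; exact hbound
    have hlt : (lam S).toReal < e := by
      calc (lam S).toReal ≤ (m + 1) / c := htr
        _ < e := by
            rw [div_lt_iff₀ hcpos]
            calc m + 1 = ((m + 1) / e) * e := by field_simp
              _ < c * e := mul_lt_mul_of_pos_right hcgt he0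
              _ = e * c := mul_comm _ _
    have hfinS : lam S ≠ ∞ := (lt_of_le_of_lt prob_le_one one_lt_top).ne
    rw [← ENNReal.ofReal_toReal hfinS, ← ENNReal.ofReal_toReal hεtop]
    exact ENNReal.ofReal_le_ofReal hlt.le
  -- conclude
  have := hf.tendsto_setIntegral_nhds_zero hlam0
  apply this.congr
  intro n
  exact (key n f hf A hA).symm
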